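/- arXiv:2505.17383 — 7 statements merged into one kernel-verified Lean document; each statement's English description precedes it below -/
import Mathlib

section
/- Let R be an associative unital ring containing elements a13, a14, a23, a24 such that a13 is invertible and the relations a13·a14 = a14·a13, a23·a24 = a24·a23, and a13·a24 − a24·a13 + a23·a14 − a14·a23 = 0 hold. Define a'24 = a24 − a13⁻¹·a14·a23 and a'21 = −a13⁻¹·a23. Then a'24·a'21 = a'21·a'24. -/
/-- Chart change λ₁ → λ₂ of NCG(2,4): first commutativity relation of I'. -/
theorem ncg24_chart2_rel1 {R : Type*} [Ring R] (a13 a14 a23 a24 b : R)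
    (hb1 : a13 * b = 1) (hb2 : b * a13 = 1)
    (h1 : a13 * a14 = a14 * a13) (h2 : a23 * a24 = a24 * a23)
    (h3 : a13 * a24 - a24 * a13 + a23 * a14 - a14 * a23 = 0) :
    (a24 - b * a14 * a23) * (-(b * a23)) = (-(b * a23)) * (a24 - b * a14 * a23) := by
  -- b commutes with a14
  have hb14 : a14 * b = b * a14 := by
    calc a14 * b = b * (a13 * a14) * b := by rw [← mul_assoc, hb2, one_mul]
    _ = b * a14 * (a13 * b) := by rw [h1]; noncomm_ring
    _ = b * a14 := by rw [hb1, mul_one]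
  -- rearranged h3
  have h3' : a13 * a24 = a24 * a13 - a23 * a14 + a14 * a23 := by
    have := h3
    linear_combination (norm := noncomm_ring) h3
  have key : a24 * b = b * a24 - b * a23 * a14 * b + b * a14 * a23 * b := by
    calc a24 * b = b * (a13 * a24) * b := by rw [← mul_assoc, hb2, one_mul]
    _ = b * (a24 * a13 - a23 * a14 + a14 * a23) * b := by rw [h3']
    _ = b * a24 * (a13 * b) - b * a23 * a14 * b + b * a14 * a23 * b := by noncomm_ring
    _ = b * a24 - b * a23 * a14 * b + b * a14 * a23 * b := by rw [hb1, mul_one]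
  calc (a24 - b * a14 * a23) * (-(b * a23))
      = -((a24 * b) * a23) + b * a14 * a23 * b * a23 := by noncomm_ring
    _ = -((b * a24 - b * a23 * a14 * b + b * a14 * a23 * b) * a23)
          + b * a14 * a23 * b * a23 := by rw [key]
    _ = -(b * (a24 * a23)) + b * a23 * (a14 * b) * a23 := by noncomm_ring
    _ = -(b * (a23 * a24)) + b * a23 * (b * a14) * a23 := by rw [h2, hb14]
    _ = (-(b * a23)) * (a24 - b * a14 * a23) := by noncomm_ring
end

section
/- Let R be an associative unital ring containing elements a13, a14, a23, a24 such that a13 is invertible and the relations a13·a14 = a14·a13, a23·a24 = a24·a23, and a13·a24 − a24·a13 + a23·a14 − a14·a23 = 0 hold. Define a'24 = a24 − a13⁻¹·a14·a23, a'21 = −a13⁻¹·a23, a'34 = a13⁻¹·a14, a'31 = a13⁻¹. Then a'24·a'31 − a'31·a'24 + a'34·a'21 − a'21·a'34 = 0. -/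
/-- Chart change λ₁ → λ₂ of NCG(2,4): the mixed "quartet" relation of I'. -/
theorem ncg24_chart2_rel3 {R : Type*} [Ring R] (a13 a14 a23 a24 b : R)
    (hb1 : a13 * b = 1) (hb2 : b * a13 = 1)
    (h1 : a13 * a14 = a14 * a13) (h2 : a23 * a24 = a24 * a23)
    (h3 : a13 * a24 - a24 * a13 + a23 * a14 - a14 * a23 = 0) :
    (a24 - b * a14 * a23) * b - b * (a24 - b * a14 * a23)
      + (b * a14) * (-(b * a23)) - (-(b * a23)) * (b * a14) = 0 := by
  linear_combination (norm := noncomm_ring)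
    b * h3 * b - hb2 * (a24*b) + (b*a24) * hb1
    - (b*a23*b) * h1 * b + (b*a23) * hb2 * (a14*b) - (b*a23*b*a14) * hb1
    - (b*b) * h1 * (b*a23) + b * hb2 * (a14*b*a23) - (b*b*a14) * hb1 * a23
end

section
/- Let R be an associative unital ring containing elements a24, a21, a34, a31 with both a31 and a'24 := a24 invertible (write elements of the chart λ₂ as a'24 = a24, a'21 = a21, a'34 = a34, a'31 = a31), satisfying a'24·a'21 = a'21·a'24, a'34·a'31 = a'31·a'34, and a'24·a'31 − a'31·a'24 + a'34·a'21 − a'21·a'34 = 0. Define d = a'31⁻¹·(a'24 − a'31⁻¹·a'34·a'21) + a'31⁻¹·a'34·a'31⁻¹·a'21 and d'' = (a'31 − a'24⁻¹·a'21·a'34)·a'24⁻¹ + a'24⁻¹·a'34·a'24⁻¹·a'21. Then d·d'' = 1 and d''·d = 1. -/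
/-- Lemma 4.3(1) of the paper: in the chart λ₂ variables (with b31 = a31⁻¹ and
b24 = a24⁻¹ two-sided inverses), the elements d and d'' are mutually inverse. -/
theorem ncg24_d_d''_inverse {R : Type*} [Ring R] (a24 a21 a34 a31 b31 b24 : R)
    (h31a : a31 * b31 = 1) (h31b : b31 * a31 = 1)
    (h24a : a24 * b24 = 1) (h24b : b24 * a24 = 1)
    (h1 : a24 * a21 = a21 * a24) (h2 : a34 * a31 = a31 * a34)
    (h3 : a24 * a31 - a31 * a24 + a34 * a21 - a21 * a34 = 0) :
    (b31 * (a24 - b31 * a34 * a21) + b31 * a34 * b31 * a21) *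
      ((a31 - b24 * a21 * a34) * b24 + b24 * a34 * b24 * a21) = 1 ∧
    ((a31 - b24 * a21 * a34) * b24 + b24 * a34 * b24 * a21) *
      (b31 * (a24 - b31 * a34 * a21) + b31 * a34 * b31 * a21) = 1 := by
  -- b31 commutes with a34
  have hc1 : a34 * b31 = b31 * a34 := by
    calc a34 * b31 = (b31 * a31) * (a34 * b31) := by rw [h31b]; noncomm_ring
    _ = b31 * ((a31 * a34) * b31) := by noncomm_ring
    _ = b31 * ((a34 * a31) * b31) := by rw [h2]
    _ = b31 * (a34 * (a31 * b31)) := by noncomm_ring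
    _ = b31 * (a34 * 1) := by rw [h31a]
    _ = b31 * a34 := by noncomm_ring
  -- b24 commutes with a21
  have hc2 : a21 * b24 = b24 * a21 := by
    calc a21 * b24 = (b24 * a24) * (a21 * b24) := by rw [h24b]; noncomm_ring
    _ = b24 * ((a24 * a21) * b24) := by noncomm_ring
    _ = b24 * ((a21 * a24) * b24) := by rw [h1]
    _ = b24 * (a21 * (a24 * b24)) := by noncomm_ring
    _ = b24 * (a21 * 1) := by rw [h24a]
    _ = b24 * a21 := by noncomm_ring
  -- d = b31 * a24
  have hd : b31 * (a24 - b31 * a34 * a21) + b31 * a34 * b31 * a21 = b31 * a24 := by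
    calc b31 * (a24 - b31 * a34 * a21) + b31 * a34 * b31 * a21
        = b31 * a24 - b31 * b31 * (a34 * a21) + b31 * (a34 * b31) * a21 := by noncomm_ring
    _ = b31 * a24 - b31 * b31 * (a34 * a21) + b31 * (b31 * a34) * a21 := by rw [hc1]
    _ = b31 * a24 := by noncomm_ring
  have h3' : a34 * a21 - a21 * a34 = a31 * a24 - a24 * a31 := by
    rw [← sub_eq_zero, ← h3]; noncomm_ring
  -- d'' = b24 * a31
  have hdd : (a31 - b24 * a21 * a34) * b24 + b24 * a34 * b24 * a21 = b24 * a31 := by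
    calc (a31 - b24 * a21 * a34) * b24 + b24 * a34 * b24 * a21
        = a31 * b24 - b24 * (a21 * a34) * b24 + b24 * a34 * (b24 * a21) := by noncomm_ring
    _ = a31 * b24 - b24 * (a21 * a34) * b24 + b24 * a34 * (a21 * b24) := by rw [← hc2]
    _ = a31 * b24 + b24 * (a34 * a21 - a21 * a34) * b24 := by noncomm_ring
    _ = a31 * b24 + b24 * (a31 * a24 - a24 * a31) * b24 := by rw [h3']
    _ = a31 * b24 + b24 * a31 * (a24 * b24) - b24 * a24 * (a31 * b24) := by noncomm_ring
    _ = a31 * b24 + b24 * a31 * 1 - b24 * a24 * (a31 * b24) := by rw [h24a]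
    _ = a31 * b24 + b24 * a31 * 1 - 1 * (a31 * b24) := by rw [h24b]
    _ = b24 * a31 := by noncomm_ring
  rw [hd, hdd]
  constructor
  · calc b31 * a24 * (b24 * a31) = b31 * ((a24 * b24) * a31) := by noncomm_ring
    _ = b31 * (1 * a31) := by rw [h24a]
    _ = 1 := by rw [one_mul, h31b]
  · calc b24 * a31 * (b31 * a24) = b24 * ((a31 * b31) * a24) := by noncomm_ring
    _ = b24 * (1 * a24) := by rw [h31a]
    _ = 1 := by rw [one_mul, h24b]
end

section
/- Let R be an associative unital ring containing elements a13, a14, a23, a24 with a13 and d := a13·a24 − a14·a23 invertible, satisfying a13·a14 = a14·a13, a23·a24 = a24·a23, and a13·a24 − a24·a13 + a23·a14 − a14·a23 = 0. Assume also that a24 − a13⁻¹·a14·a23 is invertible with inverse equal to d⁻¹·a13. Then a13⁻¹ + (a24 − a13⁻¹·a14·a23)⁻¹·a13⁻¹·a23·a13⁻¹·a14 = d⁻¹·a24. -/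
/-- Lemma 4.3(2): computation of a''31 = d⁻¹·a24. Here b is a two-sided inverse
of a13, e a two-sided inverse of d = a13·a24 − a14·a23, and the inverse of
a24 − a13⁻¹·a14·a23 is e·a13. -/
theorem ncg24_a''31_formula {R : Type*} [Ring R] (a13 a14 a23 a24 b e : R)
    (hb1 : a13 * b = 1) (hb2 : b * a13 = 1)
    (he1 : (a13 * a24 - a14 * a23) * e = 1) (he2 : e * (a13 * a24 - a14 * a23) = 1)
    (hs1 : (a24 - b * a14 * a23) * (e * a13) = 1)
    (hs2 : (e * a13) * (a24 - b * a14 * a23) = 1)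
    (h1 : a13 * a14 = a14 * a13) (h2 : a23 * a24 = a24 * a23)
    (h3 : a13 * a24 - a24 * a13 + a23 * a14 - a14 * a23 = 0) :
    b + (e * a13) * b * a23 * b * a14 = e * a24 := by
  have hba : b * a14 = a14 * b := by
    calc b * a14 = b * a14 * (a13 * b) := by rw [hb1, mul_one]
    _ = b * (a14 * a13) * b := by noncomm_ring
    _ = b * (a13 * a14) * b := by rw [h1]
    _ = (b * a13) * (a14 * b) := by noncomm_ring
    _ = a14 * b := by rw [hb2, one_mul]
  have h3' : a13 * a24 - a14 * a23 = a24 * a13 - a23 * a14 := by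
    linear_combination (norm := noncomm_ring) h3
  have hkey : (a13 * a24 - a14 * a23) * b = a24 - a23 * (b * a14) := by
    calc (a13 * a24 - a14 * a23) * b = (a24 * a13 - a23 * a14) * b := by rw [h3']
    _ = a24 * (a13 * b) - a23 * (a14 * b) := by noncomm_ring
    _ = a24 - a23 * (b * a14) := by rw [hb1, mul_one, hba]
  calc b + (e * a13) * b * a23 * b * a14
      = b + e * (a13 * b) * (a23 * (b * a14)) := by noncomm_ring
    _ = b + e * (a24 - (a13 * a24 - a14 * a23) * b) := by rw [hb1, mul_one, hkey]; noncomm_ring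
    _ = b + e * a24 - (e * (a13 * a24 - a14 * a23)) * b := by noncomm_ring
    _ = e * a24 := by rw [he2, one_mul]; abel
end

section
/- Let R be an associative unital ring containing elements a13, a14, a23, a24 with a13 invertible and with a24 − a13⁻¹·a14·a23 invertible, satisfying a13·a14 = a14·a13, a23·a24 = a24·a23, and a13·a24 − a24·a13 + a23·a14 − a14·a23 = 0. Then a13·a24 − a14·a23 is invertible, with inverse (a24 − a13⁻¹·a14·a23)⁻¹·a13⁻¹. -/
/-- The noncommutative determinant d = a13·a24 − a14·a23 is invertible once a13
and the Schur-type complement a24 − a13⁻¹·a14·a23 are, with inverse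
(a24 − a13⁻¹·a14·a23)⁻¹·a13⁻¹. -/
theorem ncg24_det_invertible {R : Type*} [Ring R] (a13 a14 a23 a24 b s : R)
    (hb1 : a13 * b = 1) (hb2 : b * a13 = 1)
    (hs1 : (a24 - b * a14 * a23) * s = 1) (hs2 : s * (a24 - b * a14 * a23) = 1)
    (h1 : a13 * a14 = a14 * a13) (h2 : a23 * a24 = a24 * a23)
    (h3 : a13 * a24 - a24 * a13 + a23 * a14 - a14 * a23 = 0) :
    (a13 * a24 - a14 * a23) * (s * b) = 1 ∧
    (s * b) * (a13 * a24 - a14 * a23) = 1 := by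
  have key : a13 * a24 - a14 * a23 = a13 * (a24 - b * a14 * a23) := by
    rw [mul_sub, ← mul_assoc, ← mul_assoc, hb1, one_mul]
  constructor
  · rw [key, mul_assoc, ← mul_assoc _ s, hs1, one_mul, hb1]
  · rw [key, mul_assoc, ← mul_assoc b, hb2, one_mul, hs2]
end

section
/- Let R be an associative unital ring with elements a13, a14, a23, a24 satisfying a13·a14 = a14·a13, a23·a24 = a24·a23, and a13·a24 − a24·a13 + a23·a14 − a14·a23 = 0, with a13 and a23 both invertible. Define a'''14 = a14 − a23⁻¹·a24·a13, a'''12 = −a23⁻¹·a13, a'''34 = a23⁻¹·a24, a'''32 = a23⁻¹. Then a'''12·a'''14 = a'''14·a'''12, a'''32·a'''34 = a'''34·a'''32, and a'''12·a'''34 − a'''14·a'''32 + a'''32·a'''14 − a'''34·a'''12 = 0. -/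
/-- The relations I''' of the chart λ₄ = {1,3} of NCG(2,4) follow from those of
λ₁ = {1,2}; here b13, b23 are two-sided inverses of a13, a23, and
a'''14 = a14 − b23·a24·a13, a'''12 = −b23·a13, a'''34 = b23·a24, a'''32 = b23. -/
theorem ncg24_chart4_relations {R : Type*} [Ring R] (a13 a14 a23 a24 b13 b23 : R)
    (h13a : a13 * b13 = 1) (h13b : b13 * a13 = 1)
    (h23a : a23 * b23 = 1) (h23b : b23 * a23 = 1)
    (h1 : a13 * a14 = a14 * a13) (h2 : a23 * a24 = a24 * a23)
    (h3 : a13 * a24 - a24 * a13 + a23 * a14 - a14 * a23 = 0) :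
    (-(b23 * a13)) * (a14 - b23 * a24 * a13) = (a14 - b23 * a24 * a13) * (-(b23 * a13)) ∧
    b23 * (b23 * a24) = (b23 * a24) * b23 ∧
    (-(b23 * a13)) * (b23 * a24) - (a14 - b23 * a24 * a13) * b23
      + b23 * (a14 - b23 * a24 * a13) - (b23 * a24) * (-(b23 * a13)) = 0 := by
  -- b23 commutes with a24
  have hc : b23 * a24 = a24 * b23 := by
    calc b23 * a24 = b23 * a24 * (a23 * b23) := by rw [h23a, mul_one]
    _ = b23 * (a24 * a23) * b23 := by noncomm_ring
    _ = b23 * (a23 * a24) * b23 := by rw [h2]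
    _ = (b23 * a23) * (a24 * b23) := by noncomm_ring
    _ = a24 * b23 := by rw [h23b, one_mul]
  -- rearranged form of h3
  have e2 : a23 * a14 - a14 * a23 = a24 * a13 - a13 * a24 := by
    have h : a23 * a14 - a14 * a23 - (a24 * a13 - a13 * a24) = 0 := by
      rw [← h3]; abel
    exact sub_eq_zero.mp h
  -- commutator of b23 and a14
  have e1 : b23 * (a23 * a14 - a14 * a23) * b23 = a14 * b23 - b23 * a14 := by
    calc b23 * (a23 * a14 - a14 * a23) * b23
        = (b23 * a23) * (a14 * b23) - (b23 * a14) * (a23 * b23) := by noncomm_ring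
    _ = a14 * b23 - b23 * a14 := by rw [h23b, h23a, one_mul, mul_one]
  have hk : b23 * a14 = a14 * b23 - b23 * (a24 * a13 - a13 * a24) * b23 := by
    rw [← e2, e1]; abel
  refine ⟨?_, ?_, ?_⟩
  · calc (-(b23 * a13)) * (a14 - b23 * a24 * a13)
        = -(b23 * (a13 * a14)) + b23 * a13 * (b23 * a24) * a13 := by noncomm_ring
    _ = -(b23 * (a14 * a13)) + b23 * a13 * (b23 * a24) * a13 := by rw [h1]
    _ = -((b23 * a14) * a13) + b23 * a13 * (b23 * a24) * a13 := by noncomm_ring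
    _ = -((a14 * b23 - b23 * (a24 * a13 - a13 * a24) * b23) * a13)
          + b23 * a13 * (a24 * b23) * a13 := by rw [hk, hc]
    _ = (a14 - b23 * a24 * a13) * (-(b23 * a13)) := by noncomm_ring
  · calc b23 * (b23 * a24) = b23 * (a24 * b23) := by rw [hc]
    _ = (b23 * a24) * b23 := by noncomm_ring
  · calc (-(b23 * a13)) * (b23 * a24) - (a14 - b23 * a24 * a13) * b23
        + b23 * (a14 - b23 * a24 * a13) - (b23 * a24) * (-(b23 * a13))
        = -(b23 * a13 * (b23 * a24)) - a14 * b23 + b23 * (a24 * a13) * b23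
          + b23 * a14 - b23 * (b23 * a24) * a13 + b23 * (a24 * b23) * a13 := by
          noncomm_ring
    _ = -(b23 * a13 * (a24 * b23)) - a14 * b23 + b23 * (a24 * a13) * b23
          + (a14 * b23 - b23 * (a24 * a13 - a13 * a24) * b23)
          - b23 * (a24 * b23) * a13 + b23 * (a24 * b23) * a13 := by rw [hc, hk]
    _ = 0 := by noncomm_ring
end

section
/- Let R be an associative unital ring with elements a24, a21, a34, a31 satisfying a24·a21 = a21·a24, a34·a31 = a31·a34, and a24·a31 − a31·a24 + a34·a21 − a21·a34 = 0, with a24 invertible. Define a''31 = a31 − a24⁻¹·a21·a34, a''32 = −a24⁻¹·a34, a''41 = a24⁻¹·a21, a''42 = a24⁻¹. Then a''31·a''32 = a''32·a''31, a''41·a''42 = a''42·a''41, and a''31·a''42 − a''42·a''31 + a''41·a''32 − a''32·a''41 = 0. -/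
/-- The relations I'' of the chart λ₃ = {3,4} of NCG(2,4) follow from the
relations I' of λ₂ = {2,3}; here b24 is a two-sided inverse of a24 and
a''31 = a31 − b24·a21·a34, a''32 = −b24·a34, a''41 = b24·a21, a''42 = b24. -/
theorem ncg24_chart3_relations {R : Type*} [Ring R] (a24 a21 a34 a31 b24 : R)
    (h24a : a24 * b24 = 1) (h24b : b24 * a24 = 1)
    (h1 : a24 * a21 = a21 * a24) (h2 : a34 * a31 = a31 * a34)
    (h3 : a24 * a31 - a31 * a24 + a34 * a21 - a21 * a34 = 0) :
    (a31 - b24 * a21 * a34) * (-(b24 * a34)) = (-(b24 * a34)) * (a31 - b24 * a21 * a34) ∧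
    (b24 * a21) * b24 = b24 * (b24 * a21) ∧
    (a31 - b24 * a21 * a34) * b24 - b24 * (a31 - b24 * a21 * a34)
      + (b24 * a21) * (-(b24 * a34)) - (-(b24 * a34)) * (b24 * a21) = 0 := by
  -- b24 commutes with a21
  have c1 : b24 * a21 = a21 * b24 := by
    have h := congrArg (fun x => b24 * x * b24) h1
    simp only [mul_assoc] at h
    rw [h24a, mul_one, ← mul_assoc b24 a24, h24b, one_mul] at h
    exact h.symm
  have e5 : b24 * (a21 * (a34 * b24)) = a21 * (b24 * (a34 * b24)) := by
    rw [← mul_assoc, c1, mul_assoc]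
  -- conjugated version of h3
  have c2 : a31 * b24 - b24 * a31 = a21 * (b24 * (a34 * b24)) - b24 * (a34 * (b24 * a21)) := by
    have h := congrArg (fun x => b24 * x * b24) h3
    simp only [mul_sub, sub_mul, mul_add, add_mul, mul_zero, zero_mul, mul_assoc] at h
    rw [← mul_assoc b24 a24, h24b, one_mul] at h
    rw [show b24 * (a31 * (a24 * b24)) = b24 * a31 by rw [h24a, mul_one]] at h
    rw [e5, ← c1] at h
    linear_combination (norm := noncomm_ring) h
  refine ⟨?_, ?_, ?_⟩
  · have e1 : b24 * (a34 * a31) = b24 * (a31 * a34) := by rw [h2]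
    have e2 : (a31 * b24 - b24 * a31) * a34
        = (a21 * (b24 * (a34 * b24)) - b24 * (a34 * (b24 * a21))) * a34 := by rw [c2]
    have e3 : b24 * a21 * (a34 * (b24 * a34)) = a21 * b24 * (a34 * (b24 * a34)) := by rw [c1]
    linear_combination (norm := noncomm_ring) e1 - e2 + e3
  · rw [show (b24 * a21) * b24 = a21 * (b24 * b24) from by rw [c1, mul_assoc],
       show b24 * (b24 * a21) = a21 * (b24 * b24) from by
         rw [c1, ← mul_assoc, c1, mul_assoc]]
  · have e4 : b24 * (b24 * a21) * a34 = b24 * (a21 * b24) * a34 := by rw [c1]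
    linear_combination (norm := noncomm_ring) c2 + e4 - e5
end
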